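/- Let L > 0, let G ∈ C¹(ℝ) be even, and let ρ ∈ C¹([0,L]) satisfy ρ(L) = 0. Then the function x ↦ 𝒢_L[ρ](x) is differentiable on [0,L] and for every x ∈ [0,L] one has (d/dx) 𝒢_L[ρ](x) = ℋ_L[ρ'](x), i.e. (d/dx) ∫₀^L [G(x−y) + G(x+y) − G(L−y) − G(L+y)] ρ(y) dy = ∫₀^L [G(x−y) − G(x+y)] ρ'(y) dy. -/

import Mathlib

open Set MeasureTheory

/-- The operator `ℋ_L[u](x) = ∫₀^L [G(x−y) − G(x+y)] u(y) dy`. -/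
noncomputable def Hop (G : ℝ → ℝ) (L : ℝ) (u : ℝ → ℝ) (x : ℝ) : ℝ :=
  ∫ y in (0:ℝ)..L, (G (x - y) - G (x + y)) * u y

/-- The operator `𝒢_L[ρ](x) = ∫₀^L [G(x−y) + G(x+y) − G(L−y) − G(L+y)] ρ(y) dy`. -/
noncomputable def Gop (G : ℝ → ℝ) (L : ℝ) (ρ : ℝ → ℝ) (x : ℝ) : ℝ :=
  ∫ y in (0:ℝ)..L, (G (x - y) + G (x + y) - G (L - y) - G (L + y)) * ρ y

/-- Differentiating the stationary-state integral operator: for `G ∈ C¹(ℝ)` even and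
`ρ ∈ C¹([0,L])` with `ρ(L) = 0`, the function `x ↦ 𝒢_L[ρ](x)` is differentiable on
`[0,L]` with derivative `ℋ_L[ρ'](x)`. -/
theorem deriv_Gop_eq_Hop
    (L : ℝ) (hL : 0 < L)
    (G : ℝ → ℝ) (hG : ContDiff ℝ 1 G) (hGeven : ∀ x, G (-x) = G x)
    (ρ ρ' : ℝ → ℝ)
    (hρ : ∀ x ∈ Icc (0:ℝ) L, HasDerivWithinAt ρ (ρ' x) (Icc 0 L) x)
    (hρ'c : ContinuousOn ρ' (Icc 0 L))
    (hρL : ρ L = 0) :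
    ∀ x ∈ Icc (0:ℝ) L,
      HasDerivWithinAt (fun t => Gop G L ρ t) (Hop G L ρ' x) (Icc 0 L) x := by
  intro x₀ hx₀
  have hGdiff : Differentiable ℝ G := hG.differentiable one_ne_zero
  have hG'cont : Continuous (deriv G) := hG.continuous_deriv le_rfl
  have huIcc : uIcc (0:ℝ) L = Icc 0 L := uIcc_of_le hL.le
  have huIoc : uIoc (0:ℝ) L = Ioc 0 L := uIoc_of_le hL.le
  have hρcont : ContinuousOn ρ (Icc 0 L) := fun y hy => (hρ y hy).continuousWithinAt
  have hGc : Continuous G := hG.continuous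
  have hcontF : ∀ c : ℝ, Continuous (fun y : ℝ => G (c - y) + G (c + y) - G (L - y) - G (L + y)) :=
    fun c => (((hGc.comp (continuous_const.sub continuous_id)).add
      (hGc.comp (continuous_const.add continuous_id))).sub
      (hGc.comp (continuous_const.sub continuous_id))).sub
      (hGc.comp (continuous_const.add continuous_id))
  have hcontF' : ∀ c : ℝ, Continuous (fun y : ℝ => deriv G (c - y) + deriv G (c + y)) :=
    fun c => (hG'cont.comp (continuous_const.sub continuous_id)).add
      (hG'cont.comp (continuous_const.add continuous_id))
  -- one-variable derivative facts for G ∘ (shift)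
  have hd1 : ∀ (c t : ℝ), HasDerivAt (fun x => G (x - t)) (deriv G (c - t)) c := by
    intro c t
    simpa [Function.comp_def] using (HasDerivAt.comp c (hGdiff (c - t)).hasDerivAt ((hasDerivAt_id c).sub_const t))
  have hd2 : ∀ (c t : ℝ), HasDerivAt (fun x => G (x + t)) (deriv G (c + t)) c := by
    intro c t
    simpa [Function.comp_def] using (HasDerivAt.comp c (hGdiff (c + t)).hasDerivAt ((hasDerivAt_id c).add_const t))
  -- Step 1: derivative under the integral sign
  set F' : ℝ → ℝ → ℝ := fun x y => (deriv G (x - y) + deriv G (x + y)) * ρ y with hF'def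
  have key : HasDerivAt (fun t => Gop G L ρ t) (∫ y in (0:ℝ)..L, F' x₀ y) x₀ := by
    -- bounds
    obtain ⟨K, hK⟩ := (isCompact_Icc.image_of_continuousOn hρcont).isBounded.exists_norm_le
    obtain ⟨C, hC⟩ := (isCompact_Icc.image_of_continuousOn
      (hG'cont.continuousOn (s := Icc (-(|x₀| + 1 + L)) (|x₀| + 1 + L)))).isBounded.exists_norm_le
    set K' := max K 0 with hK'
    set C' := max C 0 with hC'
    have hρbd : ∀ y ∈ Icc (0:ℝ) L, ‖ρ y‖ ≤ K' :=
      fun y hy => le_trans (hK _ (mem_image_of_mem ρ hy)) (le_max_left _ _)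
    have hGbd : ∀ z ∈ Icc (-(|x₀| + 1 + L)) (|x₀| + 1 + L), ‖deriv G z‖ ≤ C' :=
      fun z hz => le_trans (hC _ (mem_image_of_mem _ hz)) (le_max_left _ _)
    have main := intervalIntegral.hasDerivAt_integral_of_dominated_loc_of_deriv_le
      (F := fun x y => (G (x - y) + G (x + y) - G (L - y) - G (L + y)) * ρ y)
      (F' := F') (x₀ := x₀) (a := 0) (b := L) (μ := volume)
      (bound := fun _ => (C' + C') * K') (Metric.ball_mem_nhds x₀ one_pos)
      ?_ ?_ ?_ ?_ ?_ ?_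
    · exact main.2
    · -- measurability of F x
      filter_upwards with x
      rw [huIoc]
      apply ContinuousOn.aestronglyMeasurable _ measurableSet_Ioc
      exact ((hcontF x).continuousOn).mul (hρcont.mono Ioc_subset_Icc_self)
    · -- integrability of F x₀
      apply ContinuousOn.intervalIntegrable
      rw [huIcc]
      exact ((hcontF x₀).continuousOn).mul hρcont
    · -- measurability of F' x₀
      rw [huIoc]
      apply ContinuousOn.aestronglyMeasurable _ measurableSet_Ioc
      exact ((hcontF' x₀).continuousOn).mul (hρcont.mono Ioc_subset_Icc_self)
    · -- bound
      filter_upwards with y hy x hx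
      rw [huIoc] at hy
      have hyIcc : y ∈ Icc (0:ℝ) L := Ioc_subset_Icc_self hy
      have hxabs : |x| ≤ |x₀| + 1 := by
        have := mem_ball_iff_norm.mp hx
        have : |x - x₀| < 1 := by simpa [Real.norm_eq_abs] using this
        calc |x| = |x - x₀ + x₀| := by ring_nf
          _ ≤ |x - x₀| + |x₀| := abs_add_le _ _
          _ ≤ 1 + |x₀| := by linarith
          _ = |x₀| + 1 := by ring
      have hyabs : |y| ≤ L := by
        rw [abs_of_nonneg hyIcc.1]; exact hyIcc.2
      have hmem1 : x - y ∈ Icc (-(|x₀| + 1 + L)) (|x₀| + 1 + L) := by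
        constructor <;>
          linarith [le_abs_self x, neg_abs_le x, le_abs_self y, neg_abs_le y]
      have hmem2 : x + y ∈ Icc (-(|x₀| + 1 + L)) (|x₀| + 1 + L) := by
        constructor <;>
          linarith [le_abs_self x, neg_abs_le x, le_abs_self y, neg_abs_le y]
      have : ‖F' x y‖ = ‖deriv G (x - y) + deriv G (x + y)‖ * ‖ρ y‖ := norm_mul _ _
      rw [this]
      have h1 : ‖deriv G (x - y) + deriv G (x + y)‖ ≤ C' + C' :=
        le_trans (norm_add_le _ _) (add_le_add (hGbd _ hmem1) (hGbd _ hmem2))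
      exact mul_le_mul h1 (hρbd y hyIcc) (norm_nonneg _)
        (by rw [hC']; positivity)
    · -- integrability of bound
      exact intervalIntegrable_const
    · -- differentiability in x
      filter_upwards with y _ x _
      have h := (((hd1 x y).add (hd2 x y)).sub_const (G (L - y))).sub_const (G (L + y))
      simpa [hF'def] using h.mul_const (ρ y)
  -- Step 2: integration by parts identifies the derivative with `Hop G L ρ' x₀`
  have ibp : Hop G L ρ' x₀ = ∫ y in (0:ℝ)..L, F' x₀ y := by
    have hu : ∀ y ∈ uIcc (0:ℝ) L,
        HasDerivAt (fun y => G (x₀ - y) - G (x₀ + y))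
          (-(deriv G (x₀ - y)) - deriv G (x₀ + y)) y := by
      intro y _
      have h1 : HasDerivAt (fun y => G (x₀ - y)) (-(deriv G (x₀ - y))) y := by
        simpa [Function.comp_def] using (HasDerivAt.comp y (hGdiff (x₀ - y)).hasDerivAt
          ((hasDerivAt_id y).const_sub x₀))
      have h2 : HasDerivAt (fun y => G (x₀ + y)) (deriv G (x₀ + y)) y := by
        simpa [Function.comp_def] using (HasDerivAt.comp y (hGdiff (x₀ + y)).hasDerivAt
          ((hasDerivAt_id y).const_add x₀))
      exact h1.sub h2
    have hv : ∀ y ∈ uIcc (0:ℝ) L, HasDerivWithinAt ρ (ρ' y) (uIcc 0 L) y := by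
      rw [huIcc]; exact hρ
    have hu' : IntervalIntegrable (fun y => -(deriv G (x₀ - y)) - deriv G (x₀ + y))
        volume 0 L := (((hG'cont.comp (continuous_const.sub continuous_id)).neg.sub
          (hG'cont.comp (continuous_const.add continuous_id))).intervalIntegrable _ _)
    have hv' : IntervalIntegrable ρ' volume 0 L := by
      apply ContinuousOn.intervalIntegrable; rw [huIcc]; exact hρ'c
    have := intervalIntegral.integral_mul_deriv_eq_deriv_mul_of_hasDerivWithinAt
      (u := fun y => G (x₀ - y) - G (x₀ + y))
      (u' := fun y => -(deriv G (x₀ - y)) - deriv G (x₀ + y))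
      (v := ρ) (v' := ρ') (a := 0) (b := L)
      (fun y hy => (hu y hy).hasDerivWithinAt) hv hu' hv'
    rw [Hop, this, hρL]
    simp only [sub_zero, add_zero, mul_zero, zero_mul, sub_self, zero_sub, hF'def]
    rw [← intervalIntegral.integral_neg]
    congr 1 with y
    ring
  rw [ibp]
  exact key.hasDerivWithinAt
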